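/- Let k ≥ 1 and let Σ be a normal derivation of the atom C in natural deduction for M→ whose only open assumption formula is ξ_k (possibly occurring several times). Then every open assumption occurrence of ξ_k in Σ is the major premise of an →-elimination rule. -/
import Mathlib


/-- Formulas of purely implicational logic, built from atoms (numbered by `ℕ`)
by the single connective `→` (`impl`). -/
inductive Fm : Type
  | atom : ℕ → Fm
  | impl : Fm → Fm → Fm
deriving DecidableEq

/-- χ[X,Y] = (((X → Y) → X) → X) → Y. -/
def chi (X Y : Fm) : Fm := (((X.impl Y).impl X).impl X).impl Y

/-- The atom `Fm.atom 0` is C, and `Fm.atom k` is D_k for k ≥ 1.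
ξ₁ = χ[D₁, C] and ξ_{i+1} = χ[D_{i+1}, ξ_i]  (the value at 0 is irrelevant). -/
def xi : ℕ → Fm
  | 0 => chi (.atom 1) (.atom 0)
  | 1 => chi (.atom 1) (.atom 0)
  | n + 2 => chi (.atom (n + 2)) (xi (n + 1))

/-- φ_n = ξ_n → C. -/
def phi (n : ℕ) : Fm := (xi n).impl (.atom 0)

/-- Natural deduction derivations for M→, indexed by the multiset of open
assumption occurrences and the conclusion.  `assume a` is a one-occurrence
assumption of `a`; `intro n` is →-introduction discharging exactly `n`
occurrences of the assumption `a`; `elim` is →-elimination whose second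
premise (the implication) is the major premise. -/
inductive Deriv : Multiset Fm → Fm → Type
  | assume (a : Fm) : Deriv {a} a
  | intro {Γ : Multiset Fm} {a b : Fm} (n : ℕ)
      (d : Deriv (Γ + Multiset.replicate n a) b) : Deriv Γ (a.impl b)
  | elim {Γ Δ : Multiset Fm} {a b : Fm}
      (minor : Deriv Γ a) (major : Deriv Δ (a.impl b)) : Deriv (Γ + Δ) b

/-- The last rule of the derivation is an →-introduction. -/
def Deriv.isIntro : ∀ {Γ b}, Deriv Γ b → Prop
  | _, _, .intro _ _ => True
  | _, _, _ => False

/-- A derivation is normal if no formula occurrence is both the conclusion of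
an →-introduction and the major premise of an →-elimination. -/
def Deriv.normal : ∀ {Γ b}, Deriv Γ b → Prop
  | _, _, .assume _ => True
  | _, _, .intro _ d => d.normal
  | _, _, .elim minor major => minor.normal ∧ major.normal ∧ ¬ major.isIntro

/-- Number of assumption occurrences (leaves) of the formula `a` in a
derivation (whether discharged in the derivation or not). -/
def Deriv.countA (a : Fm) : ∀ {Γ b}, Deriv Γ b → ℕ
  | _, _, .assume c => if c = a then 1 else 0
  | _, _, .intro _ d => Deriv.countA a d
  | _, _, .elim minor major => Deriv.countA a minor + Deriv.countA a major

/-- `Deriv.nonMajorCount a d maj` counts the assumption occurrences (leaves) of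
the formula `a` in `d` that are NOT in major-premise position of an
→-elimination; the flag `maj` records whether the root of `d` itself sits in
major-premise position. -/
def Deriv.nonMajorCount (a : Fm) : ∀ {Γ b}, Deriv Γ b → Bool → ℕ
  | _, _, .assume c, maj => if c = a ∧ maj = false then 1 else 0
  | _, _, .intro _ d, _ => Deriv.nonMajorCount a d false
  | _, _, .elim minor major, _ =>
      Deriv.nonMajorCount a minor false + Deriv.nonMajorCount a major true

/-- Subformula relation: `Subf s t` means `s` is a subformula of `t`. -/
inductive Subf : Fm → Fm → Prop
  | refl (t : Fm) : Subf t t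
  | implL {s a b : Fm} : Subf s a → Subf s (Fm.impl a b)
  | implR {s a b : Fm} : Subf s b → Subf s (Fm.impl a b)

theorem Subf.trans {a b c : Fm} (h1 : Subf a b) (h2 : Subf b c) : Subf a c := by
  induction h2 with
  | refl => exact h1
  | implL _ ih => exact Subf.implL ih
  | implR _ ih => exact Subf.implR ih

/-- Size of a formula. -/
def Fm.size : Fm → ℕ
  | .atom _ => 1
  | .impl a b => a.size + b.size + 1

theorem Subf.size_le {s t : Fm} (h : Subf s t) : s.size ≤ t.size := by
  induction h with
  | refl => exact le_rfl
  | implL _ ih => simp only [Fm.size]; omega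
  | implR _ ih => simp only [Fm.size]; omega

theorem not_sub_implR {a b : Fm} (h : Subf (Fm.impl a b) b) : False := by
  have := h.size_le
  simp only [Fm.size] at this
  omega

theorem not_sub_implL {a b : Fm} (h : Subf (Fm.impl a b) a) : False := by
  have := h.size_le
  simp only [Fm.size] at this
  omega

/-- In a normal derivation whose last rule is not an introduction,
the conclusion is a subformula of some open assumption. -/
theorem spine_sub : ∀ {Γ : Multiset Fm} {b : Fm} (d : Deriv Γ b),
    d.normal → ¬ d.isIntro → ∃ γ ∈ Γ, Subf b γ := by
  intro Γ b d
  induction d with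
  | assume c =>
    intro _ _
    exact ⟨c, by simp, Subf.refl c⟩
  | intro n d ih =>
    intro _ hni
    exact absurd trivial hni
  | elim minor major ihm ihM =>
    intro hn _
    obtain ⟨h1, h2, h3⟩ := hn
    obtain ⟨γ, hγ, hsub⟩ := ihM h2 h3
    exact ⟨γ, by simp [hγ], Subf.trans (Subf.implR (Subf.refl _)) hsub⟩

/-- Main counting lemma. -/
theorem main_count (a : Fm) : ∀ {Γ : Multiset Fm} {b : Fm} (d : Deriv Γ b) (maj : Bool),
    d.normal → (∀ γ ∈ Γ, Subf γ a) → Subf b a → (b = a → maj = true) →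
    Deriv.nonMajorCount a d maj + Γ.count a ≤ Deriv.countA a d := by
  intro Γ b d
  induction d with
  | assume c =>
    intro maj hn hΓ hb hba
    simp only [Deriv.nonMajorCount, Deriv.countA, Multiset.count_singleton]
    by_cases hc : c = a
    · subst hc
      rw [hba rfl]
      simp
    · simp [hc, Ne.symm hc]
  | intro n d ih =>
    rename_i Γ' a' b'
    intro maj hn hΓ hb hba
    simp only [Deriv.nonMajorCount, Deriv.countA]
    have ha' : Subf a' a := Subf.trans (Subf.implL (Subf.refl a')) hb
    have hb' : Subf b' a := Subf.trans (Subf.implR (Subf.refl b')) hb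
    have hb'a : b' = a → (false : Bool) = true := by
      intro h; subst h
      exact absurd hb not_sub_implR
    have hΓ' : ∀ γ ∈ Γ' + Multiset.replicate n a', Subf γ a := by
      intro γ hγ
      rcases Multiset.mem_add.mp hγ with h | h
      · exact hΓ γ h
      · rw [Multiset.eq_of_mem_replicate h]; exact ha'
    have := ih false hn hΓ' hb' hb'a
    rw [Multiset.count_add] at this
    omega
  | elim minor major ihm ihM =>
    rename_i Γ₁ Γ₂ c b'
    intro maj hn hΓ hb hba
    obtain ⟨h1, h2, h3⟩ := hn
    obtain ⟨γ, hγ, hsub⟩ := spine_sub major h2 h3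
    have hcb : Subf (Fm.impl c b') a :=
      Subf.trans hsub (hΓ γ (Multiset.mem_add.mpr (Or.inr hγ)))
    have hc : Subf c a := Subf.trans (Subf.implL (Subf.refl c)) hcb
    have hca : c = a → (false : Bool) = true := by
      intro h; subst h
      exact absurd hcb not_sub_implL
    have Hm := ihm false h1 (fun γ hγ => hΓ γ (Multiset.mem_add.mpr (Or.inl hγ))) hc hca
    have HM := ihM true h2 (fun γ hγ => hΓ γ (Multiset.mem_add.mpr (Or.inr hγ))) hcb
      (fun _ => rfl)
    simp only [Deriv.nonMajorCount, Deriv.countA, Multiset.count_add]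
    omega

theorem atom0_sub_xi : ∀ n, Subf (Fm.atom 0) (xi n)
  | 0 => Subf.implR (Subf.refl _)
  | 1 => Subf.implR (Subf.refl _)
  | n + 2 => Subf.trans (atom0_sub_xi (n + 1)) (Subf.implR (Subf.refl _))

theorem xi_eq_impl : ∀ n, ∃ s t, xi n = Fm.impl s t
  | 0 => ⟨_, _, rfl⟩
  | 1 => ⟨_, _, rfl⟩
  | n + 2 => ⟨_, _, rfl⟩

/-- let k ≥ 1 and let Σ be a normal derivation of the atom C whose
open assumptions are exactly m ≥ 1 occurrences of ξ_k.  Then every open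
assumption occurrence of ξ_k in Σ is the major premise of an →-elimination:
the occurrences of ξ_k that are not major premises all lie among the
`countA - m` discharged occurrences, i.e. `nonMajorCount + m ≤ countA`. -/
theorem open_assumptions_are_major (k : ℕ) (hk : 1 ≤ k) (m : ℕ) (hm : 1 ≤ m)
    (d : Deriv (Multiset.replicate m (xi k)) (.atom 0)) (hd : d.normal) :
    Deriv.nonMajorCount (xi k) d false + m ≤ Deriv.countA (xi k) d := by
  have hne : Fm.atom 0 = xi k → (false : Bool) = true := by
    intro h
    obtain ⟨s, t, hst⟩ := xi_eq_impl k
    rw [hst] at h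
    exact Fm.noConfusion h
  have := main_count (xi k) d false hd
    (fun γ hγ => by rw [Multiset.eq_of_mem_replicate hγ]; exact Subf.refl _)
    (atom0_sub_xi k) hne
  rw [Multiset.count_replicate_self] at this
  exact this
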